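/- arXiv:2306.16628 — 2 statements merged into one kernel-verified Lean document; each statement's English description precedes it below -/
import Mathlib

section
/- Assume the payoff parameters satisfy either (a) p3 > p1 > p4 > p2, or (b) p3 > p1 > p2 > p4 together with p1 + p2 < p3 + p4 and 4·p2 < p3 + 3·p4; and assume in addition that the sets {p1 + 3p2, 2p1 + 2p2, 3p1 + p2} and {p3 + 3p4, 2p3 + 2p4} are disjoint. Then on the toroidal grid G_{N,M} with N, M ≥ 3, Ω* = {S_C, S_D}; i.e. the only configurations in which any two adjacent nodes with different strategies have equal payoffs are the all-cooperation configuration and the all-defection configuration. -/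
open MeasureTheory

namespace EvolGame

/-- A strategy: cooperation `C` or defection `D`. -/
inductive Strat : Type
  | C : Strat
  | D : Strat
  deriving DecidableEq

/-- Node set of the toroidal grid `G_{N,M}`. -/
abbrev Node (N M : ℕ) := ZMod N × ZMod M

/-- A strategy configuration. -/
abbrev Config (N M : ℕ) := Node N M → Strat

/-- Adjacency on the toroidal grid. -/
def adj {N M : ℕ} (u v : Node N M) : Prop :=
  u - v = (1, 0) ∨ u - v = (-1, 0) ∨ u - v = (0, 1) ∨ u - v = (0, -1)

/-- The (at most four) neighbors of a node. -/
def neighbors {N M : ℕ} (v : Node N M) : Finset (Node N M) :=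
  {v + (1, 0), v + (-1, 0), v + (0, 1), v + (0, -1)}

/-- Number of cooperating neighbors of `v` under configuration `S`. -/
def coopCount {N M : ℕ} (S : Config N M) (v : Node N M) : ℕ :=
  ((neighbors v).filter (fun u => S u = Strat.C)).card

/-- Payoff of node `v` under configuration `S` with payoff parameters `p1,p2,p3,p4`. -/
def payoff (p1 p2 p3 p4 : ℝ) {N M : ℕ} (S : Config N M) (v : Node N M) : ℝ :=
  if S v = Strat.C then
    (coopCount S v : ℝ) * p1 + (4 - (coopCount S v : ℝ)) * p2
  else
    (coopCount S v : ℝ) * p3 + (4 - (coopCount S v : ℝ)) * p4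

/-- A control assigns to each node one of its neighbors. -/
def IsControl {N M : ℕ} (c : Node N M → Node N M) : Prop :=
  ∀ v, adj (c v) v

open Classical in
/-- The controlled update `F(S,c)`. -/
noncomputable def F (p1 p2 p3 p4 : ℝ) {N M : ℕ} (S : Config N M)
    (c : Node N M → Node N M) : Config N M :=
  fun v =>
    if payoff p1 p2 p3 p4 S v < payoff p1 p2 p3 p4 S (c v) then S (c v) else S v

/-- The set `R(S)` of configurations reachable from `S` in one imitation step. -/
def Rset (p1 p2 p3 p4 : ℝ) {N M : ℕ} (S : Config N M) : Set (Config N M) :=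
  {S' | ∀ v, S' v = S v ∨
    ∃ u, adj u v ∧ S' v = S u ∧ payoff p1 p2 p3 p4 S v < payoff p1 p2 p3 p4 S u}

/-- `Ω*`: adjacent nodes with different strategies have equal payoffs. -/
def OmegaStar (p1 p2 p3 p4 : ℝ) (N M : ℕ) : Set (Config N M) :=
  {S | ∀ u v, adj u v → S u ≠ S v →
    payoff p1 p2 p3 p4 S u = payoff p1 p2 p3 p4 S v}

/-- Controlled trajectory of the CEG. -/
noncomputable def traj (p1 p2 p3 p4 : ℝ) {N M : ℕ} (S0 : Config N M)
    (c : ℕ → Node N M → Node N M) : ℕ → Config N M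
  | 0 => S0
  | t + 1 => F p1 p2 p3 p4 (traj p1 p2 p3 p4 S0 c t) (c t)

/-- `A` is reachable from `S0` under the CEG within `T` steps. -/
def ReachableWithin (p1 p2 p3 p4 : ℝ) {N M : ℕ} (A : Set (Config N M))
    (S0 : Config N M) (T : ℕ) : Prop :=
  ∃ t ≤ T, ∃ c : ℕ → Node N M → Node N M,
    (∀ s, IsControl (c s)) ∧ traj p1 p2 p3 p4 S0 c t ∈ A

/-- The discrete σ-algebra on the finite configuration space. -/
instance {N M : ℕ} : MeasurableSpace (Config N M) := ⊤

/-- `μ` is the law of the time-homogeneous Markov chain with kernel `κ` started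
at `S0`, characterized by its finite-dimensional (cylinder) distributions. -/
def IsChainLaw {N M : ℕ} (κ : Config N M → PMF (Config N M)) (S0 : Config N M)
    (μ : Measure (ℕ → Config N M)) : Prop :=
  IsProbabilityMeasure μ ∧
  ∀ (t : ℕ) (s : ℕ → Config N M), s 0 = S0 →
    μ {ω | ∀ i ≤ t, ω i = s i} = ∏ i ∈ Finset.range t, κ (s i) (s (i + 1))

/-- An admissible imitation kernel with margin `ε`. -/
def IsAdmissible (p1 p2 p3 p4 : ℝ) {N M : ℕ} (ε : ℝ)
    (κ : Config N M → PMF (Config N M)) : Prop :=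
  (∀ (S : Config N M) (c : Node N M → Node N M), IsControl c →
      ENNReal.ofReal ε ≤ κ S (F p1 p2 p3 p4 S c)) ∧
  (∀ S : Config N M, ∑' S' : Rset p1 p2 p3 p4 S, κ S (S' : Config N M) = 1)

open Classical in
/-- The `W`-frozen controlled update. -/
noncomputable def FW (p1 p2 p3 p4 : ℝ) {N M : ℕ} (W : Set (Node N M))
    (S : Config N M) (c : Node N M → Node N M) : Config N M :=
  fun v => if v ∈ W then S v else F p1 p2 p3 p4 S c v

/-- The `W`-frozen one-step reach set `R_W(S)`. -/
def RsetW (p1 p2 p3 p4 : ℝ) {N M : ℕ} (W : Set (Node N M)) (S : Config N M) :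
    Set (Config N M) :=
  {S' | (∀ v ∈ W, S' v = S v) ∧
    ∀ v ∉ W, S' v = S v ∨
      ∃ u, adj u v ∧ S' v = S u ∧ payoff p1 p2 p3 p4 S v < payoff p1 p2 p3 p4 S u}

/-- Controlled trajectory of the `W`-frozen CEG. -/
noncomputable def trajW (p1 p2 p3 p4 : ℝ) {N M : ℕ} (W : Set (Node N M))
    (S0 : Config N M) (c : ℕ → Node N M → Node N M) : ℕ → Config N M
  | 0 => S0
  | t + 1 => FW p1 p2 p3 p4 W (trajW p1 p2 p3 p4 W S0 c t) (c t)

/-- `A` is reachable from `S0` under the `W`-frozen CEG within `T` steps. -/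
def ReachableWithinW (p1 p2 p3 p4 : ℝ) {N M : ℕ} (W : Set (Node N M))
    (A : Set (Config N M)) (S0 : Config N M) (T : ℕ) : Prop :=
  ∃ t ≤ T, ∃ c : ℕ → Node N M → Node N M,
    (∀ s, IsControl (c s)) ∧ trajW p1 p2 p3 p4 W S0 c t ∈ A

/-- A `W`-frozen admissible imitation kernel with margin `ε`. -/
def IsAdmissibleW (p1 p2 p3 p4 : ℝ) {N M : ℕ} (W : Set (Node N M)) (ε : ℝ)
    (κ : Config N M → PMF (Config N M)) : Prop :=
  (∀ (S : Config N M) (c : Node N M → Node N M), IsControl c →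
      ENNReal.ofReal ε ≤ κ S (FW p1 p2 p3 p4 W S c)) ∧
  (∀ S : Config N M, ∑' S' : RsetW p1 p2 p3 p4 W S, κ S (S' : Config N M) = 1)


/-- Adjacency is symmetric. -/
lemma adj_symm {N M : ℕ} {u v : Node N M} (h : adj u v) : adj v u := by
  rcases h with h | h | h | h
  · right; left; rw [show v - u = -(u - v) from (neg_sub u v).symm, h]; simp
  · left; rw [show v - u = -(u - v) from (neg_sub u v).symm, h]; simp
  · right; right; right; rw [show v - u = -(u - v) from (neg_sub u v).symm, h]; simp
  · right; right; left; rw [show v - u = -(u - v) from (neg_sub u v).symm, h]; simp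

/-- Adjacent nodes are neighbors. -/
lemma mem_neighbors_of_adj {N M : ℕ} {u v : Node N M} (h : adj u v) : u ∈ neighbors v := by
  rcases h with h | h | h | h <;> rw [sub_eq_iff_eq_add'] at h <;> simp [neighbors, h]

/-- A node has at most four neighbors. -/
lemma card_neighbors_le {N M : ℕ} (v : Node N M) : (neighbors v).card ≤ 4 := by
  refine (Finset.card_insert_le _ _).trans (Nat.succ_le_succ ?_)
  refine (Finset.card_insert_le _ _).trans (Nat.succ_le_succ ?_)
  refine (Finset.card_insert_le _ _).trans (Nat.succ_le_succ ?_)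
  simp

/-- under the prisoner's dilemma or snowdrift conditions together
with the payoff-disjointness condition, `Ω*` consists exactly of the
all-cooperation and the all-defection configurations. -/
theorem omegaStar_eq_pair {N M : ℕ} (hN : 3 ≤ N) (hM : 3 ≤ M)
    (p1 p2 p3 p4 : ℝ)
    (hcase : (p3 > p1 ∧ p1 > p4 ∧ p4 > p2) ∨
      (p3 > p1 ∧ p1 > p2 ∧ p2 > p4 ∧ p1 + p2 < p3 + p4 ∧ 4 * p2 < p3 + 3 * p4))
    (hdisj : ({p1 + 3 * p2, 2 * p1 + 2 * p2, 3 * p1 + p2} : Set ℝ) ∩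
      ({p3 + 3 * p4, 2 * p3 + 2 * p4} : Set ℝ) = ∅) :
    OmegaStar p1 p2 p3 p4 N M =
      {(fun _ => Strat.C : Config N M), (fun _ => Strat.D : Config N M)} := by
  haveI : NeZero N := ⟨by omega⟩
  haveI : NeZero M := ⟨by omega⟩
  -- extract the six non-equalities from disjointness
  have hdd : ∀ x ∈ ({p1 + 3 * p2, 2 * p1 + 2 * p2, 3 * p1 + p2} : Set ℝ),
      ∀ y ∈ ({p3 + 3 * p4, 2 * p3 + 2 * p4} : Set ℝ), x ≠ y := by
    intro x hx y hy hxy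
    have : x ∈ (∅ : Set ℝ) := hdisj ▸ ⟨hx, hxy ▸ hy⟩
    exact this
  have h11 : p1 + 3 * p2 ≠ p3 + 3 * p4 := hdd _ (by left; rfl) _ (by left; rfl)
  have h12 : p1 + 3 * p2 ≠ 2 * p3 + 2 * p4 := hdd _ (by left; rfl) _ (by right; rfl)
  have h21 : 2 * p1 + 2 * p2 ≠ p3 + 3 * p4 := hdd _ (by right; left; rfl) _ (by left; rfl)
  have h22 : 2 * p1 + 2 * p2 ≠ 2 * p3 + 2 * p4 := hdd _ (by right; left; rfl) _ (by right; rfl)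
  have h31 : 3 * p1 + p2 ≠ p3 + 3 * p4 := hdd _ (by right; right; rfl) _ (by left; rfl)
  have h32 : 3 * p1 + p2 ≠ 2 * p3 + 2 * p4 := hdd _ (by right; right; rfl) _ (by right; rfl)
  ext S
  simp only [Set.mem_insert_iff, Set.mem_singleton_iff]
  constructor
  · intro hS
    -- Step 1: adjacent nodes have the same strategy
    have key : ∀ u v : Node N M, adj u v → S u = S v := by
      have core : ∀ u v : Node N M, adj u v → S u = Strat.C → S v = Strat.D → False := by
        intro u v huv hu hv
        have hvu : adj v u := adj_symm huv
        have heq := hS u v huv (by rw [hu, hv]; intro h; exact Strat.noConfusion h)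
        have humem : u ∈ neighbors v := mem_neighbors_of_adj huv
        have hvmem : v ∈ neighbors u := mem_neighbors_of_adj hvu
        set a := coopCount S u with ha
        set b := coopCount S v with hb
        have ha3 : a ≤ 3 := by
          have hsub : (neighbors u).filter (fun w => S w = Strat.C) ⊆ (neighbors u).erase v := by
            intro w hw
            simp only [Finset.mem_filter] at hw
            refine Finset.mem_erase.mpr ⟨?_, hw.1⟩
            intro hwv; rw [hwv, hv] at hw; exact Strat.noConfusion hw.2
          have := Finset.card_le_card hsub
          rw [Finset.card_erase_of_mem hvmem] at this
          have h4 := card_neighbors_le u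
          rw [ha, coopCount]
          omega
        have hb1 : 1 ≤ b := by
          have : u ∈ (neighbors v).filter (fun w => S w = Strat.C) :=
            Finset.mem_filter.mpr ⟨humem, hu⟩
          exact Finset.card_pos.mpr ⟨u, this⟩
        have hb4 : b ≤ 4 := (Finset.card_filter_le _ _).trans (card_neighbors_le v)
        rw [payoff, payoff, if_pos hu, if_neg (by rw [hv]; intro h; exact Strat.noConfusion h),
          ← ha, ← hb] at heq
        rcases hcase with ⟨c1, c2, c3⟩ | ⟨c1, c2, c3, c4, c5⟩ <;>
          interval_cases a <;> interval_cases b <;> push_cast at heq <;>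
          first
            | linarith
            | (exact h11 (by linarith))
            | (exact h12 (by linarith))
            | (exact h21 (by linarith))
            | (exact h22 (by linarith))
            | (exact h31 (by linarith))
            | (exact h32 (by linarith))
      intro u v huv
      by_contra hne
      cases hu : S u <;> cases hv : S v
      · exact hne (hu.trans hv.symm)
      · exact core u v huv hu hv
      · exact core v u (adj_symm huv) hv hu
      · exact hne (hu.trans hv.symm)
    -- Step 2: S is constant
    have h1 : ∀ v : Node N M, S (v + (1, 0)) = S v := by
      intro v
      exact key _ _ (Or.inl (add_sub_cancel_left v (1, 0)))
    have h2 : ∀ v : Node N M, S (v + (0, 1)) = S v := by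
      intro v
      exact key _ _ (Or.inr (Or.inr (Or.inl (add_sub_cancel_left v (0, 1)))))
    have hrow : ∀ (k : ℕ) (v : Node N M), S (v + ((k : ZMod N), 0)) = S v := by
      intro k
      induction k with
      | zero => intro v; norm_num; exact congrArg S (add_zero v)
      | succ k ih =>
        intro v
        have : v + (((k + 1 : ℕ) : ZMod N), 0) = (v + ((k : ZMod N), 0)) + (1, 0) := by
          push_cast
          exact Prod.ext (by simp only [Prod.fst_add]; ring) (by simp)
        rw [this, h1, ih]
    have hcol : ∀ (k : ℕ) (v : Node N M), S (v + (0, (k : ZMod M))) = S v := by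
      intro k
      induction k with
      | zero => intro v; norm_num; exact congrArg S (add_zero v)
      | succ k ih =>
        intro v
        have : v + (0, ((k + 1 : ℕ) : ZMod M)) = (v + (0, (k : ZMod M))) + (0, 1) := by
          push_cast
          exact Prod.ext (by simp) (by simp only [Prod.snd_add]; ring)
        rw [this, h2, ih]
    have hconst : ∀ v : Node N M, S v = S (0, 0) := by
      intro ⟨x, y⟩
      have e1 : ((0, 0) : Node N M) + ((x.val : ZMod N), 0) + (0, (y.val : ZMod M)) = (x, y) := by
        refine Prod.ext ?_ ?_ <;> simp [ZMod.natCast_zmod_val]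
      calc S (x, y) = S ((0, 0) + ((x.val : ZMod N), 0) + (0, (y.val : ZMod M))) := by rw [e1]
        _ = S ((0, 0) + ((x.val : ZMod N), 0)) := hcol _ _
        _ = S (0, 0) := hrow _ _
    cases h0 : S (0, 0)
    · left; funext v; rw [hconst v, h0]
    · right; funext v; rw [hconst v, h0]
  · rintro (rfl | rfl) <;> exact fun u v _ hne => absurd rfl hne


end EvolGame
end

section
/- Consider the evolutionary stag hunt game on the toroidal grid G_{N,M} with N, M ≥ 3, i.e. assume p1 > p3 > p4 > p2, and assume additionally p1 + p2 > 2·p3. Suppose the initial configuration S₀ contains four cooperation nodes forming a square, i.e. there exists (i,j) ∈ V with S₀(i,j) = S₀(i+1,j) = S₀(i,j+1) = S₀(i+1,j+1) = C. Then for every ε > 0 and every admissible imitation kernel κ with margin ε, ℙ_{S₀}-almost surely there exists a finite time T such that S_t = S_C for all t ≥ T. -/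
open MeasureTheory

namespace EvolGame

/-! ### Auxiliary development -/

instance : Fintype Strat := ⟨{Strat.C, Strat.D}, fun x => by cases x <;> simp⟩

section Aux

variable {N M : ℕ}

/-- The all-cooperate configuration. -/
def SC : Config N M := fun _ => Strat.C

lemma strat_cases (s : Strat) : s = Strat.C ∨ s = Strat.D := by cases s <;> simp

lemma natCast_ne_zero_zmod {n k : ℕ} (hk : 0 < k) (hlt : k < n) : ((k : ℕ) : ZMod n) ≠ 0 := by
  intro h
  rw [ZMod.natCast_eq_zero_iff] at h
  exact absurd (Nat.le_of_dvd hk h) (by omega)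

lemma one_ne_zero_zmod (hN : 3 ≤ N) : (1 : ZMod N) ≠ 0 := by
  have := natCast_ne_zero_zmod (n := N) (k := 1) (by omega) (by omega)
  simpa using this

lemma two_ne_zero_zmod (hN : 3 ≤ N) : (2 : ZMod N) ≠ 0 := by
  have := natCast_ne_zero_zmod (n := N) (k := 2) (by omega) (by omega)
  simpa using this

lemma neg_one_ne_zero_zmod (hN : 3 ≤ N) : (-1 : ZMod N) ≠ 0 := by
  simpa using neg_ne_zero.mpr (one_ne_zero_zmod hN)

lemma one_ne_neg_one_zmod (hN : 3 ≤ N) : (1 : ZMod N) ≠ -1 := by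
  intro h
  have h2 : (2 : ZMod N) = 0 := by linear_combination h
  exact two_ne_zero_zmod hN h2

lemma mem_neighbors_self_add (v : Node N M) (d : Node N M)
    (hd : d = (1,0) ∨ d = (-1,0) ∨ d = (0,1) ∨ d = (0,-1)) :
    v + d ∈ neighbors v := by
  rcases hd with h | h | h | h <;> subst h <;> simp [neighbors]

lemma card_neighbors (hN : 3 ≤ N) (hM : 3 ≤ M) (v : Node N M) :
    (neighbors v).card = 4 := by
  have h1 : (1 : ZMod N) ≠ 0 := one_ne_zero_zmod hN
  have h1' : (1 : ZMod M) ≠ 0 := one_ne_zero_zmod hM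
  have h2 : (1 : ZMod N) ≠ -1 := one_ne_neg_one_zmod hN
  have h2' : (1 : ZMod M) ≠ -1 := one_ne_neg_one_zmod hM
  have hn1 : (-1 : ZMod N) ≠ 0 := neg_one_ne_zero_zmod hN
  have hn1' : (-1 : ZMod M) ≠ 0 := neg_one_ne_zero_zmod hM
  rw [neighbors]
  rw [Finset.card_insert_of_notMem, Finset.card_insert_of_notMem,
    Finset.card_insert_of_notMem, Finset.card_singleton]
  · simp only [Finset.mem_singleton, add_right_inj, Prod.ext_iff]
    tauto
  · simp only [Finset.mem_insert, Finset.mem_singleton, add_right_inj, Prod.ext_iff]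
    push_neg
    tauto
  · simp only [Finset.mem_insert, Finset.mem_singleton, add_right_inj, Prod.ext_iff]
    push_neg
    refine ⟨fun h => absurd h h2, fun h => absurd h h1, fun h => absurd h h1⟩

lemma coopCount_le_four (S : Config N M) (v : Node N M) : coopCount S v ≤ 4 := by
  have key : ∀ (a b c d : Node N M),
      (insert a (insert b (insert c ({d} : Finset (Node N M))))).card ≤ 4 := by
    intro a b c d
    have h1 := Finset.card_insert_le a (insert b (insert c ({d} : Finset (Node N M))))
    have h2 := Finset.card_insert_le b (insert c ({d} : Finset (Node N M)))
    have h3 := Finset.card_insert_le c ({d} : Finset (Node N M))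
    simp only [Finset.card_singleton] at *
    omega
  refine le_trans (Finset.card_filter_le _ _) ?_
  rw [neighbors]
  exact key _ _ _ _

variable {p1 p2 p3 p4 : ℝ}

lemma payoffD_le (h34 : p4 ≤ p3) {S : Config N M} {w : Node N M}
    (hw : S w = Strat.D) : payoff p1 p2 p3 p4 S w ≤ 4 * p3 := by
  rw [payoff, if_neg (by simp [hw])]
  have hk4 : (coopCount S w : ℝ) ≤ 4 := by exact_mod_cast coopCount_le_four S w
  have hk0 : (0 : ℝ) ≤ (coopCount S w : ℝ) := Nat.cast_nonneg _
  nlinarith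

lemma payoffC_ge (h12 : p2 ≤ p1) {S : Config N M} {u : Node N M}
    (hu : S u = Strat.C) (h2 : 2 ≤ coopCount S u) :
    2 * p1 + 2 * p2 ≤ payoff p1 p2 p3 p4 S u := by
  rw [payoff, if_pos hu]
  have hk4 : (coopCount S u : ℝ) ≤ 4 := by exact_mod_cast coopCount_le_four S u
  have hk2 : (2 : ℝ) ≤ (coopCount S u : ℝ) := by exact_mod_cast h2
  nlinarith

lemma payoffD_lt_payoffC (h13 : p1 > p3) (h34 : p3 > p4) (h42 : p4 > p2)
    (hsum : p1 + p2 > 2 * p3) {S : Config N M} {u w : Node N M}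
    (hu : S u = Strat.C) (h2 : 2 ≤ coopCount S u) (hw : S w = Strat.D) :
    payoff p1 p2 p3 p4 S w < payoff p1 p2 p3 p4 S u := by
  have hD := payoffD_le (p1 := p1) (p2 := p2) (p3 := p3) (p4 := p4) (le_of_lt h34) hw
  have hC := payoffC_ge (p1 := p1) (p2 := p2) (p3 := p3) (p4 := p4) (by linarith) hu h2
  linarith

/-- A cooperator with at least two cooperating neighbors stays a cooperator
under any one-step imitation transition. -/
lemma stays_C (h13 : p1 > p3) (h34 : p3 > p4) (h42 : p4 > p2)
    (hsum : p1 + p2 > 2 * p3) {S S' : Config N M}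
    (hS' : S' ∈ Rset p1 p2 p3 p4 S) {u : Node N M}
    (hu : S u = Strat.C) (h2 : 2 ≤ coopCount S u) : S' u = Strat.C := by
  rcases hS' u with h | ⟨w, _, hval, hlt⟩
  · rw [h, hu]
  · rcases strat_cases (S w) with hw | hw
    · rw [hval, hw]
    · exact absurd hlt (not_lt.mpr
        (le_of_lt (payoffD_lt_payoffC h13 h34 h42 hsum hu h2 hw)))

lemma F_mem_Rset {S : Config N M} {c : Node N M → Node N M}
    (hc : IsControl c) : F p1 p2 p3 p4 S c ∈ Rset p1 p2 p3 p4 S := by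
  intro v
  by_cases h : payoff p1 p2 p3 p4 S v < payoff p1 p2 p3 p4 S (c v)
  · exact Or.inr ⟨c v, hc v, by rw [F, if_pos h], h⟩
  · exact Or.inl (by rw [F, if_neg h])

/-! ### Rectangles of cooperators -/

/-- `u` lies in the `(a+1) × (b+1)` rectangle with corner `v`. -/
def inRect (v : Node N M) (a b : ℕ) (u : Node N M) : Prop :=
  ∃ x ≤ a, ∃ y ≤ b, u = v + (((x : ℕ) : ZMod N), ((y : ℕ) : ZMod M))

lemma add_horiz (v : Node N M) (x y : ℕ) :
    v + (((x : ℕ) : ZMod N), ((y : ℕ) : ZMod M)) + ((1 : ZMod N), (0 : ZMod M))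
      = v + ((((x+1 : ℕ)) : ZMod N), ((y : ℕ) : ZMod M)) := by
  rw [add_assoc]
  congr 1
  simp only [Prod.mk_add_mk, Prod.ext_iff]
  constructor <;> push_cast <;> ring

lemma sub_horiz (v : Node N M) (x y : ℕ) (hx : 1 ≤ x) :
    v + (((x : ℕ) : ZMod N), ((y : ℕ) : ZMod M)) + ((-1 : ZMod N), (0 : ZMod M))
      = v + ((((x-1 : ℕ)) : ZMod N), ((y : ℕ) : ZMod M)) := by
  rw [add_assoc]
  congr 1
  simp only [Prod.mk_add_mk, Prod.ext_iff]
  rw [Nat.cast_sub hx]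
  constructor <;> push_cast <;> ring

lemma add_vert (v : Node N M) (x y : ℕ) :
    v + (((x : ℕ) : ZMod N), ((y : ℕ) : ZMod M)) + ((0 : ZMod N), (1 : ZMod M))
      = v + (((x : ℕ) : ZMod N), (((y+1 : ℕ)) : ZMod M)) := by
  rw [add_assoc]
  congr 1
  simp only [Prod.mk_add_mk, Prod.ext_iff]
  constructor <;> push_cast <;> ring

lemma sub_vert (v : Node N M) (x y : ℕ) (hy : 1 ≤ y) :
    v + (((x : ℕ) : ZMod N), ((y : ℕ) : ZMod M)) + ((0 : ZMod N), (-1 : ZMod M))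
      = v + (((x : ℕ) : ZMod N), (((y-1 : ℕ)) : ZMod M)) := by
  rw [add_assoc]
  congr 1
  simp only [Prod.mk_add_mk, Prod.ext_iff]
  rw [Nat.cast_sub hy]
  constructor <;> push_cast <;> ring

lemma rect_neighbor_horiz {v : Node N M} {a b : ℕ} (ha : 1 ≤ a) {u : Node N M}
    (hu : inRect v a b u) :
    ∃ e : ZMod N, (e = 1 ∨ e = -1) ∧ inRect v a b (u + (e, 0)) := by
  obtain ⟨x, hx, y, hy, rfl⟩ := hu
  by_cases hxa : x < a
  · exact ⟨1, Or.inl rfl, x + 1, by omega, y, hy, add_horiz v x y⟩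
  · have hx1 : 1 ≤ x := by omega
    exact ⟨-1, Or.inr rfl, x - 1, by omega, y, hy, sub_horiz v x y hx1⟩

lemma rect_neighbor_vert {v : Node N M} {a b : ℕ} (hb : 1 ≤ b) {u : Node N M}
    (hu : inRect v a b u) :
    ∃ e : ZMod M, (e = 1 ∨ e = -1) ∧ inRect v a b (u + (0, e)) := by
  obtain ⟨x, hx, y, hy, rfl⟩ := hu
  by_cases hyb : y < b
  · exact ⟨1, Or.inl rfl, x, hx, y + 1, by omega, add_vert v x y⟩
  · have hy1 : 1 ≤ y := by omega
    exact ⟨-1, Or.inr rfl, x, hx, y - 1, by omega, sub_vert v x y hy1⟩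

lemma coopCount_two_of_rect (hN : 3 ≤ N) (hM : 3 ≤ M) {S : Config N M}
    {v : Node N M} {a b : ℕ} (ha : 1 ≤ a) (hb : 1 ≤ b)
    (hC : ∀ u, inRect v a b u → S u = Strat.C) {u : Node N M}
    (hu : inRect v a b u) : 2 ≤ coopCount S u := by
  obtain ⟨e, he, hin⟩ := rect_neighbor_horiz ha hu
  obtain ⟨f, hf, hin'⟩ := rect_neighbor_vert hb hu
  have hene : e ≠ 0 := by
    rcases he with h | h <;> rw [h]
    · exact one_ne_zero_zmod hN
    · exact neg_one_ne_zero_zmod hN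
  have hwmem : u + (e, (0 : ZMod M)) ∈ neighbors u := by
    apply mem_neighbors_self_add
    rcases he with h | h <;> rw [h] <;> simp
  have hwmem' : u + ((0 : ZMod N), f) ∈ neighbors u := by
    apply mem_neighbors_self_add
    rcases hf with h | h <;> rw [h] <;> simp
  have hne : u + (e, (0 : ZMod M)) ≠ u + ((0 : ZMod N), f) := by
    intro h
    rw [add_right_inj] at h
    exact hene (Prod.ext_iff.mp h).1
  have hsub : ({u + (e, (0 : ZMod M)), u + ((0 : ZMod N), f)} : Finset (Node N M)) ⊆
      (neighbors u).filter (fun z => S z = Strat.C) := by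
    intro z hz
    rw [Finset.mem_insert, Finset.mem_singleton] at hz
    rcases hz with h | h <;> subst h <;> rw [Finset.mem_filter]
    · exact ⟨hwmem, hC _ hin⟩
    · exact ⟨hwmem', hC _ hin'⟩
  calc 2 = ({u + (e, (0 : ZMod M)), u + ((0 : ZMod N), f)} : Finset (Node N M)).card :=
      (Finset.card_pair hne).symm
    _ ≤ _ := Finset.card_le_card hsub

/-! ### Growth of cooperator rectangles -/

lemma rect_stays (hN : 3 ≤ N) (hM : 3 ≤ M) (h13 : p1 > p3) (h34 : p3 > p4)
    (h42 : p4 > p2) (hsum : p1 + p2 > 2 * p3) {S S' : Config N M}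
    (hS' : S' ∈ Rset p1 p2 p3 p4 S) {v : Node N M} {a b : ℕ}
    (ha : 1 ≤ a) (hb : 1 ≤ b) (hC : ∀ u, inRect v a b u → S u = Strat.C) :
    ∀ u, inRect v a b u → S' u = Strat.C := fun u hu =>
  stays_C h13 h34 h42 hsum hS' (hC u hu)
    (coopCount_two_of_rect hN hM ha hb hC hu)

lemma grow_horiz (hN : 3 ≤ N) (hM : 3 ≤ M) (h13 : p1 > p3) (h34 : p3 > p4)
    (h42 : p4 > p2) (hsum : p1 + p2 > 2 * p3) {S : Config N M}
    {v : Node N M} {a b : ℕ} (ha : 1 ≤ a) (hb : 1 ≤ b)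
    (hC : ∀ u, inRect v a b u → S u = Strat.C) :
    ∃ c, IsControl c ∧
      ∀ u, inRect v (a+1) b u → F p1 p2 p3 p4 S c u = Strat.C := by
  classical
  set c : Node N M → Node N M := fun w =>
    if (∃ y ≤ b, w = v + ((((a+1 : ℕ)) : ZMod N), ((y : ℕ) : ZMod M)))
      then w + (-1, 0) else w + (1, 0) with hcdef
  have hctrl : IsControl c := by
    intro w
    rw [hcdef]
    dsimp only
    split_ifs
    · exact Or.inr (Or.inl (by simp))
    · exact Or.inl (by simp)
  refine ⟨c, hctrl, ?_⟩
  intro u hu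
  obtain ⟨x, hx, y, hy, rfl⟩ := hu
  by_cases hxa : x ≤ a
  · exact rect_stays hN hM h13 h34 h42 hsum (F_mem_Rset hctrl) ha hb hC _
      ⟨x, hxa, y, hy, rfl⟩
  · have hx1 : x = a + 1 := by omega
    subst hx1
    have hcond : ∃ y' ≤ b, v + ((((a+1 : ℕ)) : ZMod N), ((y : ℕ) : ZMod M))
        = v + ((((a+1 : ℕ)) : ZMod N), ((y' : ℕ) : ZMod M)) := ⟨y, hy, rfl⟩
    have hcu : c (v + ((((a+1 : ℕ)) : ZMod N), ((y : ℕ) : ZMod M)))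
        = v + ((((a : ℕ)) : ZMod N), ((y : ℕ) : ZMod M)) := by
      rw [hcdef]
      dsimp only
      rw [if_pos hcond]
      have := sub_horiz (N := N) (M := M) v (a+1) y (by omega)
      simpa using this
    set u := v + ((((a+1 : ℕ)) : ZMod N), ((y : ℕ) : ZMod M)) with hudef
    have hcurect : inRect v a b (c u) := by rw [hcu]; exact ⟨a, le_refl a, y, hy, rfl⟩
    have hScu : S (c u) = Strat.C := hC _ hcurect
    have hcoop : 2 ≤ coopCount S (c u) := coopCount_two_of_rect hN hM ha hb hC hcurect
    rcases strat_cases (S u) with hu | hu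
    · rw [F]
      split_ifs with h
      · exact hScu
      · exact hu
    · rw [F, if_pos (payoffD_lt_payoffC h13 h34 h42 hsum hScu hcoop hu)]
      exact hScu

lemma grow_vert (hN : 3 ≤ N) (hM : 3 ≤ M) (h13 : p1 > p3) (h34 : p3 > p4)
    (h42 : p4 > p2) (hsum : p1 + p2 > 2 * p3) {S : Config N M}
    {v : Node N M} {a b : ℕ} (ha : 1 ≤ a) (hb : 1 ≤ b)
    (hC : ∀ u, inRect v a b u → S u = Strat.C) :
    ∃ c, IsControl c ∧
      ∀ u, inRect v a (b+1) u → F p1 p2 p3 p4 S c u = Strat.C := by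
  classical
  set c : Node N M → Node N M := fun w =>
    if (∃ x ≤ a, w = v + (((x : ℕ) : ZMod N), (((b+1 : ℕ)) : ZMod M)))
      then w + (0, -1) else w + (0, 1) with hcdef
  have hctrl : IsControl c := by
    intro w
    rw [hcdef]
    dsimp only
    split_ifs
    · exact Or.inr (Or.inr (Or.inr (by simp)))
    · exact Or.inr (Or.inr (Or.inl (by simp)))
  refine ⟨c, hctrl, ?_⟩
  intro u hu
  obtain ⟨x, hx, y, hy, rfl⟩ := hu
  by_cases hyb : y ≤ b
  · exact rect_stays hN hM h13 h34 h42 hsum (F_mem_Rset hctrl) ha hb hC _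
      ⟨x, hx, y, hyb, rfl⟩
  · have hy1 : y = b + 1 := by omega
    subst hy1
    have hcond : ∃ x' ≤ a, v + (((x : ℕ) : ZMod N), (((b+1 : ℕ)) : ZMod M))
        = v + (((x' : ℕ) : ZMod N), (((b+1 : ℕ)) : ZMod M)) := ⟨x, hx, rfl⟩
    have hcu : c (v + (((x : ℕ) : ZMod N), (((b+1 : ℕ)) : ZMod M)))
        = v + (((x : ℕ) : ZMod N), (((b : ℕ)) : ZMod M)) := by
      rw [hcdef]
      dsimp only
      rw [if_pos hcond]
      have := sub_vert (N := N) (M := M) v x (b+1) (by omega)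
      simpa using this
    set u := v + (((x : ℕ) : ZMod N), (((b+1 : ℕ)) : ZMod M)) with hudef
    have hcurect : inRect v a b (c u) := by rw [hcu]; exact ⟨x, hx, b, le_refl b, rfl⟩
    have hScu : S (c u) = Strat.C := hC _ hcurect
    have hcoop : 2 ≤ coopCount S (c u) := coopCount_two_of_rect hN hM ha hb hC hcurect
    rcases strat_cases (S u) with hu | hu
    · rw [F]
      split_ifs with h
      · exact hScu
      · exact hu
    · rw [F, if_pos (payoffD_lt_payoffC h13 h34 h42 hsum hScu hcoop hu)]
      exact hScu

/-! ### Trajectory lemmas -/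

lemma traj_shift (S : Config N M) (c : ℕ → Node N M → Node N M) (t : ℕ) :
    traj p1 p2 p3 p4 S c (t+1)
      = traj p1 p2 p3 p4 (F p1 p2 p3 p4 S (c 0)) (fun i => c (i+1)) t := by
  induction t with
  | zero => rfl
  | succ t ih =>
    show F p1 p2 p3 p4 (traj p1 p2 p3 p4 S c (t+1)) (c (t+1)) = _
    rw [ih]
    rfl

lemma traj_congr {S : Config N M} {c c' : ℕ → Node N M → Node N M} :
    ∀ {t : ℕ}, (∀ s < t, c s = c' s) →
      traj p1 p2 p3 p4 S c t = traj p1 p2 p3 p4 S c' t := by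
  intro t
  induction t with
  | zero => intro _; rfl
  | succ t ih =>
    intro h
    show F p1 p2 p3 p4 (traj p1 p2 p3 p4 S c t) (c t) = _
    rw [ih (fun s hs => h s (by omega)), h t (by omega)]
    rfl

lemma traj_add (S : Config N M) (c : ℕ → Node N M → Node N M) (m n : ℕ) :
    traj p1 p2 p3 p4 S c (m + n)
      = traj p1 p2 p3 p4 (traj p1 p2 p3 p4 S c m) (fun i => c (m + i)) n := by
  induction n with
  | zero => rfl
  | succ n ih =>
    show traj p1 p2 p3 p4 S c ((m + n) + 1) = _
    show F p1 p2 p3 p4 (traj p1 p2 p3 p4 S c (m + n)) (c (m + n)) = _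
    rw [ih]
    rfl

lemma grow_horiz_iter (hN : 3 ≤ N) (hM : 3 ≤ M) (h13 : p1 > p3) (h34 : p3 > p4)
    (h42 : p4 > p2) (hsum : p1 + p2 > 2 * p3) {v : Node N M} {b : ℕ} (hb : 1 ≤ b) :
    ∀ (k : ℕ) (a : ℕ) (S : Config N M), 1 ≤ a →
      (∀ u, inRect v a b u → S u = Strat.C) →
      ∃ c : ℕ → Node N M → Node N M, (∀ s, IsControl (c s)) ∧
        ∀ u, inRect v (a + k) b u → traj p1 p2 p3 p4 S c k u = Strat.C := by
  intro k
  induction k with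
  | zero =>
    intro a S ha hC
    exact ⟨fun _ w => w + (1, 0), fun _ w => Or.inl (by simp),
      fun u hu => hC u (by simpa using hu)⟩
  | succ k ih =>
    intro a S ha hC
    obtain ⟨c0, hc0, h1⟩ := grow_horiz hN hM h13 h34 h42 hsum ha hb hC
    obtain ⟨cr, hcr, h2⟩ := ih (a + 1) (F p1 p2 p3 p4 S c0) (by omega) h1
    refine ⟨fun t => if t = 0 then c0 else cr (t - 1), ?_, ?_⟩
    · intro s
      by_cases hs : s = 0 <;> simp [hs, hc0, hcr]
    · intro u hu
      rw [traj_shift]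
      have hc00 : (if (0:ℕ) = 0 then c0 else cr (0 - 1)) = c0 := by simp
      rw [hc00]
      have : (fun i => if i + 1 = 0 then c0 else cr (i + 1 - 1)) = cr := by
        funext i
        simp
      rw [this]
      exact h2 u (by rw [show a + 1 + k = a + (k + 1) by omega]; exact hu)

lemma grow_vert_iter (hN : 3 ≤ N) (hM : 3 ≤ M) (h13 : p1 > p3) (h34 : p3 > p4)
    (h42 : p4 > p2) (hsum : p1 + p2 > 2 * p3) {v : Node N M} {a : ℕ} (ha : 1 ≤ a) :
    ∀ (k : ℕ) (b : ℕ) (S : Config N M), 1 ≤ b →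
      (∀ u, inRect v a b u → S u = Strat.C) →
      ∃ c : ℕ → Node N M → Node N M, (∀ s, IsControl (c s)) ∧
        ∀ u, inRect v a (b + k) u → traj p1 p2 p3 p4 S c k u = Strat.C := by
  intro k
  induction k with
  | zero =>
    intro b S hb hC
    exact ⟨fun _ w => w + (1, 0), fun _ w => Or.inl (by simp),
      fun u hu => hC u (by simpa using hu)⟩
  | succ k ih =>
    intro b S hb hC
    obtain ⟨c0, hc0, h1⟩ := grow_vert hN hM h13 h34 h42 hsum ha hb hC
    obtain ⟨cr, hcr, h2⟩ := ih (b + 1) (F p1 p2 p3 p4 S c0) (by omega) h1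
    refine ⟨fun t => if t = 0 then c0 else cr (t - 1), ?_, ?_⟩
    · intro s
      by_cases hs : s = 0 <;> simp [hs, hc0, hcr]
    · intro u hu
      rw [traj_shift]
      have hc00 : (if (0:ℕ) = 0 then c0 else cr (0 - 1)) = c0 := by simp
      rw [hc00]
      have : (fun i => if i + 1 = 0 then c0 else cr (i + 1 - 1)) = cr := by
        funext i
        simp
      rw [this]
      exact h2 u (by rw [show b + 1 + k = b + (k + 1) by omega]; exact hu)

/-! ### The all-C configuration -/

lemma coopCount_SC (hN : 3 ≤ N) (hM : 3 ≤ M) (v : Node N M) :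
    coopCount (SC : Config N M) v = 4 := by
  have hfilter : Finset.filter (fun u => (SC : Config N M) u = Strat.C) (neighbors v)
      = neighbors v :=
    Finset.filter_true_of_mem (fun u _ => rfl)
  rw [coopCount, hfilter]
  exact card_neighbors hN hM v

lemma payoff_SC (hN : 3 ≤ N) (hM : 3 ≤ M) (v : Node N M) :
    payoff p1 p2 p3 p4 (SC : Config N M) v = 4 * p1 := by
  rw [payoff, if_pos (show (SC : Config N M) v = Strat.C from rfl), coopCount_SC hN hM]
  norm_num

lemma F_SC (hN : 3 ≤ N) (hM : 3 ≤ M) (c : Node N M → Node N M) :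
    F p1 p2 p3 p4 (SC : Config N M) c = SC := by
  funext v
  rw [F, if_neg]
  rw [payoff_SC hN hM, payoff_SC hN hM]
  exact lt_irrefl _

lemma Rset_SC (hN : 3 ≤ N) (hM : 3 ≤ M) {S' : Config N M}
    (h : S' ∈ Rset p1 p2 p3 p4 (SC : Config N M)) : S' = SC := by
  funext v
  rcases h v with h1 | ⟨u, _, _, hlt⟩
  · exact h1
  · rw [payoff_SC hN hM, payoff_SC hN hM] at hlt
    exact absurd hlt (lt_irrefl _)

lemma traj_SC (hN : 3 ≤ N) (hM : 3 ≤ M) (c : ℕ → Node N M → Node N M) (t : ℕ) :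
    traj p1 p2 p3 p4 (SC : Config N M) c t = SC := by
  induction t with
  | zero => rfl
  | succ t ih =>
    show F p1 p2 p3 p4 (traj p1 p2 p3 p4 (SC : Config N M) c t) (c t) = SC
    rw [ih, F_SC hN hM]

lemma rect_full (hN : 3 ≤ N) (hM : 3 ≤ M) {S : Config N M} {v : Node N M}
    (hC : ∀ u, inRect v (N-1) (M-1) u → S u = Strat.C) : S = SC := by
  haveI : NeZero N := ⟨by omega⟩
  haveI : NeZero M := ⟨by omega⟩
  funext w
  apply hC
  refine ⟨(w - v).1.val, by have := ZMod.val_lt (w - v).1; omega,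
    (w - v).2.val, by have := ZMod.val_lt (w - v).2; omega, ?_⟩
  rw [ZMod.natCast_zmod_val, ZMod.natCast_zmod_val]
  rw [show ((w - v).1, (w - v).2) = w - v from rfl]
  ring

/-- Reaching all-C from a configuration containing a square of cooperators. -/
lemma reach_SC (hN : 3 ≤ N) (hM : 3 ≤ M) (h13 : p1 > p3) (h34 : p3 > p4)
    (h42 : p4 > p2) (hsum : p1 + p2 > 2 * p3) {S : Config N M} {v : Node N M}
    (hC : ∀ u, inRect v 1 1 u → S u = Strat.C) :
    ∃ c : ℕ → Node N M → Node N M, (∀ s, IsControl (c s)) ∧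
      ∀ t, N + M ≤ t → traj p1 p2 p3 p4 S c t = SC := by
  obtain ⟨cH, hcH, h1⟩ := grow_horiz_iter hN hM h13 h34 h42 hsum le_rfl (N-2) 1 S le_rfl hC
  rw [show 1 + (N-2) = N-1 by omega] at h1
  obtain ⟨cV, hcV, h2⟩ := grow_vert_iter hN hM h13 h34 h42 hsum (by omega) (M-2) 1
    (traj p1 p2 p3 p4 S cH (N-2)) le_rfl h1
  rw [show 1 + (M-2) = M-1 by omega] at h2
  have hSC : traj p1 p2 p3 p4 (traj p1 p2 p3 p4 S cH (N-2)) cV (M-2) = SC :=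
    rect_full hN hM (fun u hu => h2 u hu)
  set c : ℕ → Node N M → Node N M :=
    fun t => if t < N-2 then cH t else cV (t - (N-2)) with hcdef
  refine ⟨c, ?_, ?_⟩
  · intro s
    rw [hcdef]
    dsimp only
    split_ifs
    · exact hcH s
    · exact hcV _
  · intro t ht
    have hdecomp : t = (N-2) + ((M-2) + (t - (N-2) - (M-2))) := by omega
    rw [hdecomp, traj_add]
    have e1 : traj p1 p2 p3 p4 S c (N-2) = traj p1 p2 p3 p4 S cH (N-2) := by
      apply traj_congr
      intro s hs
      rw [hcdef]
      simp [hs]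
    have e2 : (fun i => c ((N-2) + i)) = cV := by
      funext i
      rw [hcdef]
      dsimp only
      have hni : ¬ ((N-2) + i < N-2) := by omega
      rw [if_neg hni, show (N-2) + i - (N-2) = i from by omega]
    rw [e1, e2, traj_add, hSC, traj_SC hN hM]

/-! ### Squares of cooperators -/

/-- `S` contains a `2 × 2` square of cooperators. -/
def HasSquare (S : Config N M) : Prop :=
  ∃ v : Node N M, ∀ u, inRect v 1 1 u → S u = Strat.C

lemma hasSquare_stays (hN : 3 ≤ N) (hM : 3 ≤ M) (h13 : p1 > p3) (h34 : p3 > p4)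
    (h42 : p4 > p2) (hsum : p1 + p2 > 2 * p3) {S S' : Config N M}
    (hS' : S' ∈ Rset p1 p2 p3 p4 S) (hsq : HasSquare S) : HasSquare S' := by
  obtain ⟨v, hC⟩ := hsq
  exact ⟨v, rect_stays hN hM h13 h34 h42 hsum hS' le_rfl le_rfl hC⟩

lemma hasSquare_of_four {S : Config N M} {v : Node N M}
    (h0 : S v = Strat.C) (h1 : S (v + (1, 0)) = Strat.C)
    (h2 : S (v + (0, 1)) = Strat.C) (h3 : S (v + (1, 1)) = Strat.C) :
    HasSquare S := by
  refine ⟨v, ?_⟩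
  rintro u ⟨x, hx, y, hy, rfl⟩
  interval_cases x <;> interval_cases y <;>
      simp only [Nat.cast_zero, Nat.cast_one]
  · simpa [Prod.mk_zero_zero] using h0
  · exact h2
  · exact h1
  · exact h3


end Aux

/-! ### Path sums -/

section Prob

open scoped ENNReal

variable {N M : ℕ} [NeZero N] [NeZero M]

open Classical in
/-- Sum over constrained paths of products of kernel transition probabilities,
with a terminal weight. -/
noncomputable def pathSum (κ : Config N M → PMF (Config N M)) :
    (ℕ → Config N M → Prop) → (Config N M → ℝ≥0∞) → ℕ → Config N M → ℝ≥0∞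
  | Fc, f, 0, S => if Fc 0 S then f S else 0
  | Fc, f, t+1, S => if Fc 0 S then
      ∑ S' : Config N M, κ S S' * pathSum κ (fun i => Fc (i+1)) f t S' else 0

variable {κ : Config N M → PMF (Config N M)}

lemma kernel_sum_one (κ : Config N M → PMF (Config N M)) (S : Config N M) :
    ∑ S' : Config N M, κ S S' = 1 := by
  rw [← tsum_fintype (L := SummationFilter.unconditional _)]
  exact (κ S).tsum_coe

lemma pathSum_eq_zero {Fc : ℕ → Config N M → Prop} {f : Config N M → ℝ≥0∞}
    {S : Config N M} (h : ¬ Fc 0 S) (t : ℕ) : pathSum κ Fc f t S = 0 := by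
  cases t <;> simp [pathSum, h]

lemma pathSum_mono : ∀ (t : ℕ) (Fc Gc : ℕ → Config N M → Prop)
    (f g : Config N M → ℝ≥0∞), (∀ i x, Fc i x → Gc i x) → (∀ x, f x ≤ g x) →
    ∀ S, pathSum κ Fc f t S ≤ pathSum κ Gc g t S := by
  intro t
  induction t with
  | zero =>
    intro Fc Gc f g hF hf S
    simp only [pathSum]
    split_ifs with h1 h2
    · exact hf S
    · exact absurd (hF 0 S h1) h2
    · exact zero_le
    · exact le_rfl
  | succ t ih =>
    intro Fc Gc f g hF hf S
    simp only [pathSum]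
    split_ifs with h1 h2
    · exact Finset.sum_le_sum fun S' _ =>
        mul_le_mul_right (ih _ _ _ _ (fun i x => hF (i+1) x) hf S') _
    · exact absurd (hF 0 S h1) h2
    · exact zero_le
    · exact le_rfl

lemma pathSum_true_one : ∀ (t : ℕ) (S : Config N M),
    pathSum κ (fun _ _ => True) (fun _ => 1) t S = 1 := by
  intro t
  induction t with
  | zero => intro S; simp [pathSum]
  | succ t ih =>
    intro S
    simp only [pathSum, if_pos trivial]
    simp only [ih, mul_one]
    exact kernel_sum_one κ S

lemma pathSum_le_one {Fc : ℕ → Config N M → Prop} {f : Config N M → ℝ≥0∞}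
    (hf : ∀ x, f x ≤ 1) (t : ℕ) (S : Config N M) : pathSum κ Fc f t S ≤ 1 := by
  calc pathSum κ Fc f t S ≤ pathSum κ (fun _ _ => True) (fun _ => 1) t S :=
    pathSum_mono t _ _ _ _ (fun _ _ _ => trivial) hf S
  _ = 1 := pathSum_true_one t S

lemma pathSum_add : ∀ (t : ℕ) (Fc : ℕ → Config N M → Prop)
    (f g : Config N M → ℝ≥0∞) (S : Config N M),
    pathSum κ Fc (fun x => f x + g x) t S
      = pathSum κ Fc f t S + pathSum κ Fc g t S := by
  intro t
  induction t with
  | zero => intro Fc f g S; simp only [pathSum]; split_ifs <;> simp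
  | succ t ih =>
    intro Fc f g S
    simp only [pathSum]
    split_ifs
    · simp only [ih, mul_add, Finset.sum_add_distrib]
    · simp

lemma pathSum_smul : ∀ (t : ℕ) (Fc : ℕ → Config N M → Prop) (r : ℝ≥0∞)
    (f : Config N M → ℝ≥0∞) (S : Config N M),
    pathSum κ Fc (fun x => r * f x) t S = r * pathSum κ Fc f t S := by
  intro t
  induction t with
  | zero => intro Fc r f S; simp only [pathSum]; split_ifs <;> simp
  | succ t ih =>
    intro Fc r f S
    simp only [pathSum]
    split_ifs
    · simp only [ih, Finset.mul_sum]
      exact Finset.sum_congr rfl fun S' _ => by ring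
    · simp

lemma pathSum_chain (f : Config N M → ℝ≥0∞) (n : ℕ) :
    ∀ (m : ℕ) (Fc : ℕ → Config N M → Prop) (S : Config N M),
    pathSum κ Fc f (m + n) S
      = pathSum κ Fc (fun S' => pathSum κ (fun i => Fc (m + i)) f n S') m S := by
  intro m
  induction m with
  | zero =>
    intro Fc S
    have he : (fun i => Fc (0 + i)) = Fc := by funext i; rw [Nat.zero_add]
    rw [Nat.zero_add]
    simp only [pathSum, he]
    split_ifs with h
    · rfl
    · exact pathSum_eq_zero h n
  | succ m ih =>
    intro Fc S
    have hidx : m + 1 + n = (m + n) + 1 := by omega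
    rw [hidx]
    simp only [pathSum]
    split_ifs
    · apply Finset.sum_congr rfl
      intro S' _
      rw [ih]
      rw [show (fun i => Fc (m + i + 1)) = (fun i => Fc (m + 1 + i)) from
        funext fun i => by rw [show m + i + 1 = m + 1 + i from by omega]]
    · rfl

open Classical in
lemma pathSum_end (f : Config N M → ℝ≥0∞) :
    ∀ (t : ℕ) (Fc : ℕ → Config N M → Prop) (S : Config N M),
    pathSum κ Fc f t S
      = pathSum κ Fc (fun x => if Fc t x then f x else 0) t S := by
  intro t
  induction t with
  | zero =>
    intro Fc S
    simp only [pathSum]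
    split_ifs with h1 <;> simp [h1]
  | succ t ih =>
    intro Fc S
    simp only [pathSum]
    split_ifs
    · exact Finset.sum_congr rfl fun S' _ => by rw [ih (fun i => Fc (i+1)) S']
    · rfl

lemma pathSum_ge_control (p1 p2 p3 p4 : ℝ) {ε : ℝ}
    (hadm : ∀ (S : Config N M) (c : Node N M → Node N M), IsControl c →
      ENNReal.ofReal ε ≤ κ S (F p1 p2 p3 p4 S c)) (f : Config N M → ℝ≥0∞) :
    ∀ (t : ℕ) (cs : ℕ → Node N M → Node N M), (∀ s, IsControl (cs s)) →
    ∀ S, ENNReal.ofReal ε ^ t * f (traj p1 p2 p3 p4 S cs t)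
      ≤ pathSum κ (fun _ _ => True) f t S := by
  intro t
  induction t with
  | zero => intro cs hcs S; simp [pathSum, traj]
  | succ t ih =>
    intro cs hcs S
    have hstep : ENNReal.ofReal ε ^ (t+1) * f (traj p1 p2 p3 p4 S cs (t+1))
        ≤ κ S (F p1 p2 p3 p4 S (cs 0))
            * pathSum κ (fun _ _ => True) f t (F p1 p2 p3 p4 S (cs 0)) := by
      rw [traj_shift, pow_succ', mul_assoc]
      exact mul_le_mul' (hadm S (cs 0) (hcs 0))
        (ih (fun i => cs (i+1)) (fun s => hcs (s+1)) _)
    refine le_trans hstep ?_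
    simp only [pathSum, if_pos trivial]
    exact Finset.single_le_sum
      (f := fun S' => κ S S' * pathSum κ (fun _ _ => True) f t S')
      (fun i _ => zero_le) (Finset.mem_univ _)

lemma kernel_zero (p1 p2 p3 p4 : ℝ) {ε : ℝ} (hκ : IsAdmissible p1 p2 p3 p4 ε κ)
    {S S' : Config N M} (h : S' ∉ Rset p1 p2 p3 p4 S) : κ S S' = 0 := by
  classical
  have h1 : ∑' x : (Rset p1 p2 p3 p4 S), κ S x = 1 := hκ.2 S
  have h2 : ∑ x ∈ Finset.univ.filter (· ∈ Rset p1 p2 p3 p4 S), κ S x = 1 := by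
    rw [← h1, tsum_subtype, tsum_fintype, Finset.sum_filter]
    exact Finset.sum_congr rfl fun x _ => by simp [Set.indicator_apply]
  have h3 := Finset.sum_filter_add_sum_filter_not Finset.univ
    (· ∈ Rset p1 p2 p3 p4 S) (fun x => (κ S x : ℝ≥0∞))
  rw [kernel_sum_one κ S, h2] at h3
  have hb : ∑ x ∈ Finset.univ.filter (fun x => ¬ x ∈ Rset p1 p2 p3 p4 S), κ S x = 0 := by
    have h4 : (1 : ℝ≥0∞) + ∑ x ∈ Finset.univ.filter
        (fun x => ¬ x ∈ Rset p1 p2 p3 p4 S), κ S x = 1 + 0 := by rw [add_zero, h3]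
    exact (ENNReal.add_right_inj (by norm_num)).mp h4
  exact (Finset.sum_eq_zero_iff.mp hb) S' (Finset.mem_filter.mpr ⟨Finset.mem_univ _, h⟩)

open Classical in
/-- The per-block constraint: at multiples of `N + M` the configuration is not
all-C, and every configuration on the path contains a square of cooperators. -/
def blockC (N M : ℕ) (i : ℕ) (x : Config N M) : Prop :=
  ((N + M) ∣ i → x ≠ SC) ∧ HasSquare x

lemma block_bound {p1 p2 p3 p4 : ℝ} (hN : 3 ≤ N) (hM : 3 ≤ M)
    (h13 : p1 > p3) (h34 : p3 > p4) (h42 : p4 > p2) (hsum : p1 + p2 > 2 * p3)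
    {ε : ℝ} (hκ : IsAdmissible p1 p2 p3 p4 ε κ) (S : Config N M) :
    pathSum κ (blockC N M) (fun _ => 1) (N + M) S
      ≤ 1 - ENNReal.ofReal ε ^ (N + M) := by
  classical
  by_cases h0 : blockC N M 0 S
  on_goal 2 => rw [pathSum_eq_zero h0]; exact zero_le
  obtain ⟨v, hv⟩ := h0.2
  obtain ⟨cs, hcs, hreach⟩ := reach_SC hN hM h13 h34 h42 hsum hv
  have hreachL : traj p1 p2 p3 p4 S cs (N + M) = SC := hreach _ le_rfl
  have hge : ENNReal.ofReal ε ^ (N + M)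
      ≤ pathSum κ (fun _ _ => True)
          (fun x => if x = SC then 1 else 0) (N + M) S := by
    have := pathSum_ge_control p1 p2 p3 p4 hκ.1
      (fun x => if x = SC then 1 else 0) (N + M) cs hcs S
    rwa [hreachL, if_pos rfl, mul_one] at this
  have hsplit : pathSum κ (fun _ _ => True) (fun x => if x = SC then 1 else 0) (N + M) S
      + pathSum κ (fun _ _ => True) (fun x => if x = SC then 0 else 1) (N + M) S = 1 := by
    rw [← pathSum_add]
    have heq : (fun x : Config N M =>
        (if x = SC then (1:ℝ≥0∞) else 0) + (if x = SC then 0 else 1)) = fun _ => 1 := by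
      funext x; split_ifs <;> simp
    rw [heq, pathSum_true_one]
  have hcomp : pathSum κ (blockC N M) (fun _ => 1) (N + M) S
      ≤ pathSum κ (fun _ _ => True) (fun x => if x = SC then 0 else 1) (N + M) S := by
    rw [pathSum_end]
    apply pathSum_mono _ _ _ _ _ (fun _ _ _ => trivial)
    intro x
    split_ifs with h1 h2 h2
    · exact absurd h2 (h1.1 (dvd_refl _))
    · exact le_rfl
    · exact zero_le
    · exact zero_le
  have h1le : pathSum κ (fun _ _ => True) (fun x => if x = SC then (1:ℝ≥0∞) else 0) (N + M) S ≤ 1 :=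
    pathSum_le_one (fun x => by split_ifs <;> simp) _ _
  have heq2 : pathSum κ (fun _ _ => True) (fun x => if x = SC then (0:ℝ≥0∞) else 1) (N + M) S
      = 1 - pathSum κ (fun _ _ => True) (fun x => if x = SC then 1 else 0) (N + M) S := by
    refine ENNReal.eq_sub_of_add_eq ?_ ?_
    · exact lt_of_le_of_lt h1le (by norm_num) |>.ne
    · rw [add_comm]; exact hsplit
  rw [heq2] at hcomp
  exact le_trans hcomp (tsub_le_tsub_left hge 1)

lemma main_bound {p1 p2 p3 p4 : ℝ} (hN : 3 ≤ N) (hM : 3 ≤ M)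
    (h13 : p1 > p3) (h34 : p3 > p4) (h42 : p4 > p2) (hsum : p1 + p2 > 2 * p3)
    {ε : ℝ} (hκ : IsAdmissible p1 p2 p3 p4 ε κ) :
    ∀ (n : ℕ) (S : Config N M),
      pathSum κ (blockC N M) (fun _ => 1) (n * (N + M)) S
        ≤ (1 - ENNReal.ofReal ε ^ (N + M)) ^ n := by
  intro n
  induction n with
  | zero =>
    intro S
    simp only [Nat.zero_mul, pathSum, pow_zero]
    split_ifs <;> simp
  | succ n ih =>
    intro S
    have hidx : (n+1) * (N + M) = (N + M) + n * (N + M) := by ring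
    rw [hidx, pathSum_chain]
    have hshift : (fun i => blockC N M ((N + M) + i)) = blockC N M := by
      funext i x
      rw [blockC, blockC, Nat.dvd_add_right (dvd_refl (N + M))]
    rw [hshift]
    calc pathSum κ (blockC N M)
          (fun S' => pathSum κ (blockC N M) (fun _ => 1) (n * (N + M)) S') (N + M) S
        ≤ pathSum κ (blockC N M)
          (fun _ => (1 - ENNReal.ofReal ε ^ (N + M)) ^ n) (N + M) S :=
        pathSum_mono _ _ _ _ _ (fun _ _ h => h) (fun S' => ih S') S
      _ = (1 - ENNReal.ofReal ε ^ (N + M)) ^ n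
            * pathSum κ (blockC N M) (fun _ => 1) (N + M) S := by
        rw [show (fun _ : Config N M => (1 - ENNReal.ofReal ε ^ (N + M)) ^ n)
          = (fun x : Config N M => (1 - ENNReal.ofReal ε ^ (N + M)) ^ n
              * (fun _ : Config N M => (1:ℝ≥0∞)) x) from by funext x; rw [mul_one]]
        exact pathSum_smul _ _ _ _ S
      _ ≤ (1 - ENNReal.ofReal ε ^ (N + M)) ^ n * (1 - ENNReal.ofReal ε ^ (N + M)) :=
        mul_le_mul_right (block_bound hN hM h13 h34 h42 hsum hκ S) _
      _ = (1 - ENNReal.ofReal ε ^ (N + M)) ^ (n + 1) := (pow_succ _ n).symm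

/-! ### Cylinder decomposition of the path measure -/

/-- Extend a finite path to an infinite one (junk value `SC` beyond `t`). -/
def extPath (t : ℕ) (a : Fin (t+1) → Config N M) : ℕ → Config N M :=
  fun i => if h : i < t + 1 then a ⟨i, h⟩ else SC

lemma extPath_le {t : ℕ} (a : Fin (t+1) → Config N M) {i : ℕ} (h : i ≤ t) :
    extPath t a i = a ⟨i, by omega⟩ := dif_pos (by omega)

lemma measurableSet_config (s : Set (Config N M)) : MeasurableSet s :=
  MeasurableSpace.measurableSet_top

lemma measurableSet_cyl (t : ℕ) (s : ℕ → Config N M) :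
    MeasurableSet {ω : ℕ → Config N M | ∀ i ≤ t, ω i = s i} := by
  have he : {ω : ℕ → Config N M | ∀ i ≤ t, ω i = s i}
      = ⋂ i ∈ Set.Iic t, (fun ω : ℕ → Config N M => ω i) ⁻¹' {s i} := by
    ext ω
    simp [Set.mem_iInter]
  rw [he]
  exact MeasurableSet.biInter (Set.to_countable _)
    (fun i _ => (measurable_pi_apply i) (measurableSet_config _))

lemma measure_eq_sum_cyl (μ : Measure (ℕ → Config N M)) (t : ℕ)
    (Q : (ℕ → Config N M) → Prop)
    [DecidablePred fun a : Fin (t+1) → Config N M => Q (extPath t a)]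
    (hQ : ∀ ω ω', (∀ i ≤ t, ω i = ω' i) → Q ω → Q ω') :
    μ {ω | Q ω} = ∑ a ∈ Finset.univ.filter
        (fun a : Fin (t+1) → Config N M => Q (extPath t a)),
      μ {ω | ∀ i ≤ t, ω i = extPath t a i} := by
  classical
  rw [← measure_biUnion_finset]
  · congr 1
    ext ω
    simp only [Set.mem_iUnion, Finset.mem_filter, Finset.mem_univ, true_and,
      Set.mem_setOf_eq]
    constructor
    · intro hω
      refine ⟨fun j => ω j, ?_, ?_⟩
      · exact hQ ω _ (fun i hi =>
          (extPath_le (fun j : Fin (t+1) => ω (j:ℕ)) hi).symm) hω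
      · intro i hi
        exact (extPath_le (fun j : Fin (t+1) => ω (j:ℕ)) hi).symm
    · rintro ⟨a, hQa, hωa⟩
      exact hQ (extPath t a) ω (fun i hi => (hωa i hi).symm) hQa
  · intro a _ b _ hab
    simp only [Function.onFun]
    rw [Set.disjoint_left]
    intro ω hωa hωb
    apply hab
    funext j
    have h1 := hωa j (by omega : (j : ℕ) ≤ t)
    have h2 := hωb j (by omega : (j : ℕ) ≤ t)
    rw [extPath_le _ (by omega : (j : ℕ) ≤ t)] at h1 h2
    rw [← Fin.eta j j.isLt, ← h1, ← h2]
  · intro a _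
    exact measurableSet_cyl t _

open Classical in
lemma cyl_measure {κ : Config N M → PMF (Config N M)} {S0 : Config N M}
    {μ : Measure (ℕ → Config N M)} (hμ : IsChainLaw κ S0 μ) (t : ℕ)
    (s : ℕ → Config N M) :
    μ {ω | ∀ i ≤ t, ω i = s i}
      = if s 0 = S0 then ∏ i ∈ Finset.range t, κ (s i) (s (i+1)) else 0 := by
  by_cases h : s 0 = S0
  · rw [if_pos h]
    exact hμ.2 t s h
  · rw [if_neg h]
    haveI := hμ.1
    have h1 : μ {ω : ℕ → Config N M | ω 0 = S0} = 1 := by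
      have h0 := hμ.2 0 (fun _ => S0) rfl
      rw [show {ω : ℕ → Config N M | ω 0 = S0}
          = {ω : ℕ → Config N M | ∀ i ≤ 0, ω i = (fun _ => S0) i} from by
        ext ω; simp [Nat.le_zero]]
      rw [h0]
      simp
    have h2 : μ {ω : ℕ → Config N M | ¬ ω 0 = S0} = 0 := by
      have hms : MeasurableSet {ω : ℕ → Config N M | ω 0 = S0} := by
        have hpre : {ω : ℕ → Config N M | ω 0 = S0}
            = (fun ω : ℕ → Config N M => ω 0) ⁻¹' {S0} := rfl
        rw [hpre]
        exact measurable_pi_apply 0 (measurableSet_config _)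
      have := measure_compl hms (measure_ne_top μ _)
      rw [h1] at this
      exact (by simpa [measure_univ] using this : μ {ω : ℕ → Config N M | ω 0 = S0}ᶜ = 0)
    refine measure_mono_null ?_ h2
    intro ω hω
    simp only [Set.mem_setOf_eq]
    intro h0
    exact h (by rw [← hω 0 (Nat.zero_le t)]; exact h0)

open Classical in
lemma sum_cyl_eq_pathSum (κ : Config N M → PMF (Config N M)) :
    ∀ (t : ℕ) (Fc : ℕ → Config N M → Prop) (S : Config N M),
    (∑ a : Fin (t+1) → Config N M,
      if (extPath t a 0 = S ∧ ∀ i ≤ t, Fc i (extPath t a i))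
        then ∏ i ∈ Finset.range t, κ (extPath t a i) (extPath t a (i+1)) else 0)
      = pathSum κ Fc (fun _ => 1) t S := by
  intro t
  induction t with
  | zero =>
    intro Fc S
    have key : ∀ a : Fin (0+1) → Config N M,
        (if (extPath 0 a 0 = S ∧ ∀ i ≤ 0, Fc i (extPath 0 a i))
          then ∏ i ∈ Finset.range 0, κ (extPath 0 a i) (extPath 0 a (i+1)) else 0)
        = (fun x : Config N M => if (x = S ∧ Fc 0 x) then (1:ℝ≥0∞) else 0)
            (a ⟨0, Nat.zero_lt_one⟩) := by
      intro a
      have ha : extPath 0 a 0 = a ⟨0, Nat.zero_lt_one⟩ := extPath_le a (le_refl 0)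
      dsimp only
      by_cases hc : a ⟨0, Nat.zero_lt_one⟩ = S ∧ Fc 0 (a ⟨0, Nat.zero_lt_one⟩)
      · rw [if_pos hc, if_pos ⟨by rw [ha]; exact hc.1, fun i hi => by
          interval_cases i; rw [ha]; exact hc.2⟩]
        simp
      · rw [if_neg hc, if_neg]
        intro hcon
        exact hc ⟨by rw [← ha]; exact hcon.1, by
          have := hcon.2 0 (le_refl 0); rw [ha] at this; exact this⟩
    have hbij : Function.Bijective
        (fun a : Fin (0+1) → Config N M => a ⟨0, Nat.zero_lt_one⟩) := by
      constructor
      · intro a b hab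
        funext j
        have hj : j = ⟨0, Nat.zero_lt_one⟩ := by
          have hlt := j.isLt
          ext
          omega
        rw [hj]
        exact hab
      · intro x
        exact ⟨fun _ => x, rfl⟩
    rw [Fintype.sum_bijective _ hbij _
      (fun x : Config N M => if (x = S ∧ Fc 0 x) then (1:ℝ≥0∞) else 0) key]
    have step2 : (∑ x : Config N M, if (x = S ∧ Fc 0 x) then (1:ℝ≥0∞) else 0)
        = ∑ x : Config N M, if x = S then (if Fc 0 x then 1 else 0) else 0 := by
      apply Finset.sum_congr rfl
      intro x _
      by_cases h1 : x = S <;> by_cases h2 : Fc 0 x <;> simp [h1, h2]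
    rw [step2, Finset.sum_ite_eq' Finset.univ S (fun x => if Fc 0 x then (1:ℝ≥0∞) else 0),
      if_pos (Finset.mem_univ S)]
    simp only [pathSum]
  | succ t ih =>
    intro Fc S
    -- re-index over `X × (Fin (t+1) → X)`
    have hre : (∑ a : Fin (t+1+1) → Config N M,
        if (extPath (t+1) a 0 = S ∧ ∀ i ≤ t+1, Fc i (extPath (t+1) a i))
          then ∏ i ∈ Finset.range (t+1),
            κ (extPath (t+1) a i) (extPath (t+1) a (i+1)) else 0)
        = ∑ p : Config N M × (Fin (t+1) → Config N M),
          if (extPath (t+1) (Fin.cons p.1 p.2) 0 = S ∧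
              ∀ i ≤ t+1, Fc i (extPath (t+1) (Fin.cons p.1 p.2) i))
            then ∏ i ∈ Finset.range (t+1), κ (extPath (t+1) (Fin.cons p.1 p.2) i)
              (extPath (t+1) (Fin.cons p.1 p.2) (i+1)) else 0 :=
      (Fintype.sum_equiv (Fin.consEquiv (fun _ => Config N M)) _ _ (fun p => rfl)).symm
    rw [hre, Fintype.sum_prod_type]
    have hext0 : ∀ (x : Config N M) (b : Fin (t+1) → Config N M),
        extPath (t+1) (Fin.cons x b) 0 = x := by
      intro x b
      rw [extPath_le _ (by omega : 0 ≤ t+1)]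
      rw [show (⟨0, by omega⟩ : Fin (t+1+1)) = 0 from by ext; simp]
      exact Fin.cons_zero (α := fun _ : Fin (t+1+1) => Config N M) x b
    have hextS : ∀ (x : Config N M) (b : Fin (t+1) → Config N M) (i : ℕ),
        extPath (t+1) (Fin.cons x b) (i+1) = extPath t b i := by
      intro x b i
      by_cases h : i < t + 1
      · rw [extPath_le _ (by omega : i + 1 ≤ t + 1), extPath_le _ (by omega : i ≤ t)]
        have hfin : (⟨i+1, by omega⟩ : Fin (t+1+1)) = Fin.succ ⟨i, h⟩ := rfl
        rw [hfin, Fin.cons_succ]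
      · rw [extPath, extPath]
        rw [dif_neg (by omega), dif_neg (by omega)]
    -- rewrite each summand
    have hsummand : ∀ (x : Config N M) (b : Fin (t+1) → Config N M),
        (if (extPath (t+1) (Fin.cons x b) 0 = S ∧
            ∀ i ≤ t+1, Fc i (extPath (t+1) (Fin.cons x b) i))
          then ∏ i ∈ Finset.range (t+1), κ (extPath (t+1) (Fin.cons x b) i)
            (extPath (t+1) (Fin.cons x b) (i+1)) else 0)
        = (if x = S then
            (if Fc 0 x then
              κ x (extPath t b 0) *
                (if (extPath t b 0 = extPath t b 0 ∧ ∀ i ≤ t, Fc (i+1) (extPath t b i))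
                  then ∏ i ∈ Finset.range t, κ (extPath t b i) (extPath t b (i+1)) else 0)
              else 0) else 0) := by
      intro x b
      have hcond : (extPath (t+1) (Fin.cons x b) 0 = S ∧
          ∀ i ≤ t+1, Fc i (extPath (t+1) (Fin.cons x b) i))
          ↔ (x = S ∧ Fc 0 x ∧ ∀ i ≤ t, Fc (i+1) (extPath t b i)) := by
        rw [hext0]
        constructor
        · rintro ⟨h1, h2⟩
          refine ⟨h1, by have := h2 0 (by omega); rwa [hext0] at this, ?_⟩
          intro i hi
          have := h2 (i+1) (by omega)
          rwa [hextS] at this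
        · rintro ⟨h1, h2, h3⟩
          refine ⟨h1, ?_⟩
          intro i hi
          cases i with
          | zero => rwa [hext0]
          | succ j => rw [hextS]; exact h3 j (by omega)
      have hprod : (∏ i ∈ Finset.range (t+1), κ (extPath (t+1) (Fin.cons x b) i)
            (extPath (t+1) (Fin.cons x b) (i+1)))
          = (∏ i ∈ Finset.range t, κ (extPath t b i) (extPath t b (i+1)))
              * κ x (extPath t b 0) := by
        rw [Finset.prod_range_succ']
        congr 1
        · apply Finset.prod_congr rfl
          intro i _
          rw [hextS, hextS]
      by_cases h1 : x = S <;> by_cases h2 : Fc 0 x <;>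
        by_cases h3 : ∀ i ≤ t, Fc (i+1) (extPath t b i)
      · rw [if_pos (hcond.mpr ⟨h1, h2, h3⟩), hprod, if_pos h1, if_pos h2,
          if_pos ⟨rfl, h3⟩]
        ring
      · rw [if_neg (fun hc => h3 (hcond.mp hc).2.2), if_pos h1, if_pos h2,
          if_neg (fun hc => h3 hc.2), mul_zero]
      · rw [if_neg (fun hc => h2 (hcond.mp hc).2.1), if_pos h1, if_neg h2]
      · rw [if_neg (fun hc => h2 (hcond.mp hc).2.1), if_pos h1, if_neg h2]
      · rw [if_neg (fun hc => h1 (hcond.mp hc).1), if_neg h1]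
      · rw [if_neg (fun hc => h1 (hcond.mp hc).1), if_neg h1]
      · rw [if_neg (fun hc => h1 (hcond.mp hc).1), if_neg h1]
      · rw [if_neg (fun hc => h1 (hcond.mp hc).1), if_neg h1]
    have hsum2 : (∑ x : Config N M, ∑ b : Fin (t+1) → Config N M,
        if (extPath (t+1) (Fin.cons x b) 0 = S ∧
            ∀ i ≤ t+1, Fc i (extPath (t+1) (Fin.cons x b) i))
          then ∏ i ∈ Finset.range (t+1), κ (extPath (t+1) (Fin.cons x b) i)
            (extPath (t+1) (Fin.cons x b) (i+1)) else 0)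
        = ∑ x : Config N M, (if x = S then
            (if Fc 0 x then ∑ b : Fin (t+1) → Config N M,
              κ x (extPath t b 0) *
                (if (extPath t b 0 = extPath t b 0 ∧ ∀ i ≤ t, Fc (i+1) (extPath t b i))
                  then ∏ i ∈ Finset.range t, κ (extPath t b i) (extPath t b (i+1)) else 0)
              else 0) else 0) := by
      apply Finset.sum_congr rfl
      intro x _
      rw [Finset.sum_congr rfl (fun b _ => hsummand x b)]
      by_cases h1 : x = S <;> by_cases h2 : Fc 0 x <;> simp [h1, h2]
    rw [hsum2, Finset.sum_ite_eq' Finset.univ S, if_pos (Finset.mem_univ S)]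
    show _ = pathSum κ Fc (fun _ => 1) (t+1) S
    rw [pathSum]
    by_cases h2 : Fc 0 S
    · rw [if_pos h2, if_pos h2]
      -- exchange the sums
      have hswap : (∑ b : Fin (t+1) → Config N M,
          κ S (extPath t b 0) *
            (if (extPath t b 0 = extPath t b 0 ∧ ∀ i ≤ t, Fc (i+1) (extPath t b i))
              then ∏ i ∈ Finset.range t, κ (extPath t b i) (extPath t b (i+1)) else 0))
          = ∑ S' : Config N M, κ S S' * ∑ b : Fin (t+1) → Config N M,
              (if (extPath t b 0 = S' ∧ ∀ i ≤ t, Fc (i+1) (extPath t b i))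
                then ∏ i ∈ Finset.range t, κ (extPath t b i) (extPath t b (i+1)) else 0) := by
        symm
        calc (∑ S' : Config N M, κ S S' * ∑ b : Fin (t+1) → Config N M,
              (if (extPath t b 0 = S' ∧ ∀ i ≤ t, Fc (i+1) (extPath t b i))
                then ∏ i ∈ Finset.range t, κ (extPath t b i) (extPath t b (i+1)) else 0))
            = ∑ S' : Config N M, ∑ b : Fin (t+1) → Config N M,
              κ S S' * (if (extPath t b 0 = S' ∧ ∀ i ≤ t, Fc (i+1) (extPath t b i))
                then ∏ i ∈ Finset.range t, κ (extPath t b i) (extPath t b (i+1)) else 0) := by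
              exact Finset.sum_congr rfl fun S' _ => Finset.mul_sum _ _ _
          _ = ∑ b : Fin (t+1) → Config N M, ∑ S' : Config N M,
              κ S S' * (if (extPath t b 0 = S' ∧ ∀ i ≤ t, Fc (i+1) (extPath t b i))
                then ∏ i ∈ Finset.range t, κ (extPath t b i) (extPath t b (i+1)) else 0) :=
              Finset.sum_comm
          _ = ∑ b : Fin (t+1) → Config N M,
              κ S (extPath t b 0) *
                (if (extPath t b 0 = extPath t b 0 ∧ ∀ i ≤ t, Fc (i+1) (extPath t b i))
                  then ∏ i ∈ Finset.range t, κ (extPath t b i) (extPath t b (i+1)) else 0) := by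
              apply Finset.sum_congr rfl
              intro b _
              have hsumm : ∀ S' : Config N M,
                  κ S S' * (if (extPath t b 0 = S' ∧ ∀ i ≤ t, Fc (i+1) (extPath t b i))
                    then ∏ i ∈ Finset.range t, κ (extPath t b i) (extPath t b (i+1)) else 0)
                  = if extPath t b 0 = S' then
                      (if (∀ i ≤ t, Fc (i+1) (extPath t b i)) then
                        κ S S' * ∏ i ∈ Finset.range t, κ (extPath t b i) (extPath t b (i+1))
                      else 0) else 0 := by
                intro S'
                by_cases hA : extPath t b 0 = S' <;>
                  by_cases hB : (∀ i ≤ t, Fc (i+1) (extPath t b i)) <;>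
                  simp [hA, hB]
              rw [Finset.sum_congr rfl (fun S' _ => hsumm S')]
              rw [Finset.sum_ite_eq Finset.univ (extPath t b 0), if_pos (Finset.mem_univ _)]
              by_cases hB : (∀ i ≤ t, Fc (i+1) (extPath t b i)) <;> simp [hB]
      rw [hswap]
      apply Finset.sum_congr rfl
      intro S' _
      rw [ih]
    · rw [if_neg h2, if_neg h2]

open Classical in
lemma measure_constraint_eq {κ : Config N M → PMF (Config N M)} {S0 : Config N M}
    {μ : Measure (ℕ → Config N M)} (hμ : IsChainLaw κ S0 μ) (t : ℕ)
    (Fc : ℕ → Config N M → Prop) :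
    μ {ω | ∀ i ≤ t, Fc i (ω i)} = pathSum κ Fc (fun _ => 1) t S0 := by
  rw [measure_eq_sum_cyl μ t (fun ω => ∀ i ≤ t, Fc i (ω i))
    (fun ω ω' hag h i hi => by rw [← hag i hi]; exact h i hi)]
  rw [← sum_cyl_eq_pathSum κ t Fc S0, Finset.sum_filter]
  apply Finset.sum_congr rfl
  intro a _
  rw [cyl_measure hμ t (extPath t a)]
  by_cases h1 : (∀ i ≤ t, Fc i (extPath t a i)) <;>
    by_cases h2 : extPath t a 0 = S0
  · rw [if_pos h1, if_pos h2, if_pos ⟨h2, h1⟩]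
  · rw [if_pos h1, if_neg h2, if_neg (fun hc => h2 hc.1)]
  · rw [if_neg h1, if_neg (fun hc => h1 hc.2)]
  · rw [if_neg h1, if_neg (fun hc => h1 hc.2)]

lemma step_invalid_null (p1 p2 p3 p4 : ℝ) {ε : ℝ}
    {κ : Config N M → PMF (Config N M)} (hκ : IsAdmissible p1 p2 p3 p4 ε κ)
    {S0 : Config N M} {μ : Measure (ℕ → Config N M)} (hμ : IsChainLaw κ S0 μ)
    (t : ℕ) :
    μ {ω | ω (t+1) ∉ Rset p1 p2 p3 p4 (ω t)} = 0 := by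
  classical
  rw [measure_eq_sum_cyl μ (t+1) (fun ω => ω (t+1) ∉ Rset p1 p2 p3 p4 (ω t))
    (fun ω ω' hag h => by
      show ω' (t+1) ∉ Rset p1 p2 p3 p4 (ω' t)
      rw [← hag (t+1) (le_refl _), ← hag t (by omega)]
      exact h)]
  apply Finset.sum_eq_zero
  intro a ha
  rw [cyl_measure hμ]
  split_ifs with h
  · apply Finset.prod_eq_zero (Finset.self_mem_range_succ t)
    exact kernel_zero p1 p2 p3 p4 hκ (Finset.mem_filter.mp ha).2
  · rfl


end Prob



/-- a.s. convergence of the evolutionary stag hunt game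
(`p1 > p3 > p4 > p2`, `p1 + p2 > 2p3`) to total cooperation, provided the
initial configuration contains a square of four cooperators. -/
theorem staghunt_as_convergence_coop {N M : ℕ} (hN : 3 ≤ N) (hM : 3 ≤ M)
    (p1 p2 p3 p4 : ℝ) (h13 : p1 > p3) (h34 : p3 > p4) (h42 : p4 > p2)
    (hsum : p1 + p2 > 2 * p3)
    (ε : ℝ) (hε : 0 < ε)
    (κ : Config N M → PMF (Config N M)) (hκ : IsAdmissible p1 p2 p3 p4 ε κ)
    (S0 : Config N M)
    (hsq : ∃ v : Node N M, S0 v = Strat.C ∧ S0 (v + (1, 0)) = Strat.C ∧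
      S0 (v + (0, 1)) = Strat.C ∧ S0 (v + (1, 1)) = Strat.C)
    (μ : Measure (ℕ → Config N M)) (hμ : IsChainLaw κ S0 μ) :
    μ {ω | ∃ T : ℕ, ∀ t ≥ T, ω t = (fun _ => Strat.C : Config N M)} = 1 := by
  classical
  haveI : NeZero N := ⟨by omega⟩
  haveI : NeZero M := ⟨by omega⟩
  haveI hPM : IsProbabilityMeasure μ := hμ.1
  obtain ⟨v0, hv1, hv2, hv3, hv4⟩ := hsq
  have hsq0 : HasSquare S0 := hasSquare_of_four hv1 hv2 hv3 hv4
  set L := N + M with hLdef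
  set η := ENNReal.ofReal ε ^ L with hetadef
  show μ {ω : ℕ → Config N M | ∃ T : ℕ, ∀ t ≥ T, ω t = SC} = 1
  set A := {ω : ℕ → Config N M | ∃ T : ℕ, ∀ t ≥ T, ω t = SC} with hA
  have hmeasA : MeasurableSet A := by
    rw [hA]
    have hAeq : {ω : ℕ → Config N M | ∃ T : ℕ, ∀ t ≥ T, ω t = SC}
        = ⋃ T : ℕ, ⋂ t : ℕ, ⋂ _ : t ≥ T, (fun ω : ℕ → Config N M => ω t) ⁻¹' {SC} := by
      ext ω
      simp only [Set.mem_setOf_eq, Set.mem_iUnion, Set.mem_iInter, Set.mem_preimage,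
        Set.mem_singleton_iff]
    rw [hAeq]
    exact MeasurableSet.iUnion fun T => MeasurableSet.iInter fun t =>
      MeasurableSet.iInter fun _ => measurable_pi_apply t (measurableSet_config _)
  set V : Set (ℕ → Config N M) :=
    {ω | ω 0 = S0} ∩ ⋂ t : ℕ, {ω | ω (t+1) ∈ Rset p1 p2 p3 p4 (ω t)} with hVdef
  have h0meas : MeasurableSet {ω : ℕ → Config N M | ω 0 = S0} := by
    have hpre : {ω : ℕ → Config N M | ω 0 = S0}
        = (fun ω : ℕ → Config N M => ω 0) ⁻¹' {S0} := rfl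
    rw [hpre]
    exact measurable_pi_apply 0 (measurableSet_config _)
  have h0one : μ {ω : ℕ → Config N M | ω 0 = S0} = 1 := by
    have h0 := hμ.2 0 (fun _ => S0) rfl
    rw [show {ω : ℕ → Config N M | ω 0 = S0}
        = {ω : ℕ → Config N M | ∀ i ≤ 0, ω i = (fun _ => S0) i} from by
      ext ω; simp [Nat.le_zero]]
    rw [h0]
    simp
  have h0null : μ {ω : ℕ → Config N M | ω 0 = S0}ᶜ = 0 := by
    have hc := measure_compl h0meas (measure_ne_top μ _)
    rw [h0one, measure_univ] at hc
    simpa using hc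
  have hVnull : μ Vᶜ = 0 := by
    rw [hVdef, Set.compl_inter, Set.compl_iInter]
    refine measure_union_null h0null ?_
    refine measure_iUnion_null fun t => ?_
    have hre : {ω : ℕ → Config N M | ω (t+1) ∈ Rset p1 p2 p3 p4 (ω t)}ᶜ
        = {ω : ℕ → Config N M | ω (t+1) ∉ Rset p1 p2 p3 p4 (ω t)} := rfl
    rw [hre]
    exact step_invalid_null p1 p2 p3 p4 hκ hμ t
  have hVmem : ∀ ω ∈ V, (ω 0 = S0) ∧ ∀ t, ω (t+1) ∈ Rset p1 p2 p3 p4 (ω t) :=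
    fun ω hω => ⟨hω.1, fun t => Set.mem_iInter.mp hω.2 t⟩
  have habsorb : ∀ ω ∈ V, ∀ n, ω n = SC → ∀ t, n ≤ t → ω t = SC := by
    intro ω hω n hn t
    induction t with
    | zero =>
      intro h0
      rw [← Nat.le_zero.mp h0]
      exact hn
    | succ t ih =>
      intro hle
      by_cases hc : n ≤ t
      · have hSCt : ω t = SC := ih hc
        have hstep := (hVmem ω hω).2 t
        rw [hSCt] at hstep
        exact Rset_SC hN hM hstep
      · have hnt : n = t+1 := by omega
        rw [← hnt]
        exact hn
  have hsqall : ∀ ω ∈ V, ∀ k, HasSquare (ω k) := by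
    intro ω hω k
    induction k with
    | zero => rw [(hVmem ω hω).1]; exact hsq0
    | succ k ih => exact hasSquare_stays hN hM h13 h34 h42 hsum ((hVmem ω hω).2 k) ih
  have hbound : ∀ n : ℕ, μ ({ω : ℕ → Config N M | ∀ k : ℕ, ω k ≠ SC} ∩ V) ≤ (1 - η)^n := by
    intro n
    have hsub2 : {ω : ℕ → Config N M | ∀ k : ℕ, ω k ≠ SC} ∩ V
        ⊆ {ω : ℕ → Config N M | ∀ i ≤ n * L, blockC N M i (ω i)} := by
      rintro ω ⟨h1, h2⟩ i hi
      exact ⟨fun _ => h1 i, hsqall ω h2 i⟩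
    calc μ ({ω : ℕ → Config N M | ∀ k : ℕ, ω k ≠ SC} ∩ V)
        ≤ μ {ω : ℕ → Config N M | ∀ i ≤ n * L, blockC N M i (ω i)} := measure_mono hsub2
      _ = pathSum κ (blockC N M) (fun _ => 1) (n * L) S0 := measure_constraint_eq hμ _ _
      _ ≤ (1 - η)^n := main_bound hN hM h13 h34 h42 hsum hκ n S0
  have hηpos : η ≠ 0 := by
    rw [hetadef]
    exact pow_ne_zero _ (ne_of_gt (ENNReal.ofReal_pos.mpr hε))
  have h1lt : (1 : ENNReal) - η < 1 :=
    ENNReal.sub_lt_self (by norm_num) (by norm_num) hηpos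
  have hlim : μ ({ω : ℕ → Config N M | ∀ k : ℕ, ω k ≠ SC} ∩ V) = 0 :=
    le_antisymm
      (ge_of_tendsto' (ENNReal.tendsto_pow_atTop_nhds_zero_of_lt_one h1lt) hbound)
      (zero_le)
  have hAcnull : μ Aᶜ = 0 := by
    have hsub : Aᶜ ⊆ ({ω : ℕ → Config N M | ∀ k : ℕ, ω k ≠ SC} ∩ V) ∪ Vᶜ := by
      intro ω hω
      by_cases hv : ω ∈ V
      · left
        refine ⟨?_, hv⟩
        intro k hk
        exact hω ⟨k, fun t ht => habsorb ω hv k hk t ht⟩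
      · right; exact hv
    exact measure_mono_null hsub (measure_union_null hlim hVnull)
  have hfin := measure_compl hmeasA (measure_ne_top μ _)
  rw [hAcnull, measure_univ] at hfin
  have h1le : (1:ENNReal) ≤ μ A := tsub_eq_zero_iff_le.mp hfin.symm
  exact le_antisymm prob_le_one h1le


end EvolGame
end
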